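/- Let α > β > 0, V ≥ 0, h > 0 with αh < 1, and let (a_n)_{n≥0} be a sequence of nonnegative reals satisfying a_{n+1} ≤ (1 - αh) a_n + βh · max_{0 ≤ i ≤ n} a_i + V h for all n ≥ 0. Then sup_{n ≥ 0} a_n ≤ max( (V + β a₀)/(α - β), a₀ ). -/

import Mathlib

theorem stmt11 (α β V h : ℝ) (hβ : 0 < β) (hαβ : β < α) (hV : 0 ≤ V)
    (hh : 0 < h) (hαh : α * h < 1)
    (a : ℕ → ℝ) (ha : ∀ n, 0 ≤ a n)
    (hrec : ∀ n, a (n + 1) ≤ (1 - α * h) * a n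
        + β * h * ((Finset.range (n + 1)).sup' Finset.nonempty_range_add_one a) + V * h) :
    ∀ n, a n ≤ max ((V + β * a 0) / (α - β)) (a 0) := by
  set M := max ((V + β * a 0) / (α - β)) (a 0) with hM
  have hαβ' : 0 < α - β := by linarith
  have hMV : V ≤ (α - β) * M := by
    have h1 : (V + β * a 0) / (α - β) ≤ M := le_max_left _ _
    have h2 := (div_le_iff₀ hαβ').mp h1
    nlinarith [ha 0]
  intro n
  induction n using Nat.strong_induction_on with
  | _ n ih =>
    cases n with
    | zero => exact le_max_right _ _
    | succ k =>
      have hsup : (Finset.range (k + 1)).sup' Finset.nonempty_range_add_one a ≤ M := by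
        apply Finset.sup'_le
        intro i hi
        exact ih i (Finset.mem_range.mp hi)
      have hk := ih k (Nat.lt_succ_self k)
      have hr := hrec k
      have h1α : 0 ≤ 1 - α * h := by linarith
      nlinarith [mul_nonneg h1α (sub_nonneg.mpr hk), mul_nonneg (mul_pos hβ hh).le (sub_nonneg.mpr hsup), mul_le_mul_of_nonneg_right hMV hh.le]
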